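/- For a binary cubic form f = a x³ + b x² y + c x y² + d y³ with integer coefficients, the multiplication table ωθ = −ad, ω² = −ac + bω − aθ, θ² = −bd + dω − cθ defines an associative commutative ring structure on the free ℤ-module ℤ·1 ⊕ ℤ·ω ⊕ ℤ·θ. -/
import Mathlib

/-- Multiplication on the free ℤ-module `ℤ·1 ⊕ ℤ·ω ⊕ ℤ·θ` associated to the binary cubic form
`f = a x³ + b x²y + c xy² + d y³`: elements are coordinate triples `(c0, c1, c2)` with respect
to the basis `1, ω, θ`, and multiplication is the ℤ-bilinear extension of the table
`ωθ = −ad`, `ω² = −ac + bω − aθ`, `θ² = −bd + dω − cθ`, with `1` the identity. -/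
def cubicMul (a b c d : ℤ) (x y : ℤ × ℤ × ℤ) : ℤ × ℤ × ℤ :=
  let x0 := x.1; let x1 := x.2.1; let x2 := x.2.2
  let y0 := y.1; let y1 := y.2.1; let y2 := y.2.2
  ( x0*y0 + (x1*y1) * (-(a*c)) + (x1*y2 + x2*y1) * (-(a*d)) + (x2*y2) * (-(b*d)),
    x0*y1 + y0*x1 + (x1*y1) * b + (x2*y2) * d,
    x0*y2 + y0*x2 + (x1*y1) * (-a) + (x2*y2) * (-c) )

/-- The multiplication table of the binary cubic form `a x³ + b x²y + c xy² + d y³` defines an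
associative commutative ring structure on the free ℤ-module `ℤ·1 ⊕ ℤ·ω ⊕ ℤ·θ`. -/
theorem cubicMul_commRing (a b c d : ℤ) :
    (∀ x y : ℤ × ℤ × ℤ, cubicMul a b c d x y = cubicMul a b c d y x) ∧
    (∀ x y z : ℤ × ℤ × ℤ,
      cubicMul a b c d (cubicMul a b c d x y) z
        = cubicMul a b c d x (cubicMul a b c d y z)) ∧
    (∀ x y z : ℤ × ℤ × ℤ,
      cubicMul a b c d x (y + z) = cubicMul a b c d x y + cubicMul a b c d x z) ∧
    (∀ x : ℤ × ℤ × ℤ, cubicMul a b c d (1, 0, 0) x = x) := by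
  refine ⟨fun x y => ?_, fun x y z => ?_, fun x y z => ?_, fun x => ?_⟩ <;>
    simp only [cubicMul, Prod.mk.injEq, Prod.ext_iff, Prod.fst_add, Prod.snd_add] <;>
    refine ⟨by ring, by ring, by ring⟩
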